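/- Let M be a reversible Mealy automaton with exactly two states. If M^n splits up totally for some n ≥ 1, then M^m splits up totally for every m ≥ n. -/

import Mathlib

/-- Extended production function of a Mealy automaton: `mealyMap δ ρ x` is the
action of the state `x` on finite words over the alphabet. -/
def mealyMap {A S : Type*} (δ : S → A → A) (ρ : A → S → S) : A → List S → List S
  | _, [] => []
  | x, i :: s => ρ x i :: mealyMap δ ρ (δ i x) s

/-- The semigroup generated by a Mealy automaton: the subsemigroup of maps
`Σ* → Σ*` (under composition) generated by the production functions. -/
def mealySemigroup {A S : Type*} (δ : S → A → A) (ρ : A → S → S) :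
    Subsemigroup (Function.End (List S)) :=
  Subsemigroup.closure (Set.range fun x => (mealyMap δ ρ x : Function.End (List S)))

/-- The group generated by an invertible Mealy automaton: the subgroup of
permutations of `Σ*` generated by the production functions. -/
def mealyGroup {A S : Type*} (δ : S → A → A) (ρ : A → S → S) :
    Subgroup (Equiv.Perm (List S)) :=
  Subgroup.closure {f : Equiv.Perm (List S) | ∃ x : A, ⇑f = mealyMap δ ρ x}

/-- A cycle in the automaton `(A, Σ, δ)`: pairwise distinct states
`states 0, …, states (n-1)` with transitions `states k —labels k→ states (k+1 mod n)`. -/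
structure MealyCycle {A S : Type*} (δ : S → A → A) where
  n : ℕ
  npos : 0 < n
  states : Fin n → A
  labels : Fin n → S
  inj : Function.Injective states
  step : ∀ k : Fin n, δ (labels k) (states k) = states ⟨(k + 1) % n, Nat.mod_lt _ npos⟩

/-- The cycle has an external exit. -/
def HasExternalExit {A S : Type*} {δ : S → A → A} (C : MealyCycle δ) : Prop :=
  ∃ (k : Fin C.n) (i : S), δ i (C.states k) ∉ Set.range C.states

/-- The cycle has an internal exit. -/
def HasInternalExit {A S : Type*} {δ : S → A → A} (C : MealyCycle δ) : Prop :=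
  ∃ (k : Fin C.n) (i : S), δ i (C.states k) ∈ Set.range C.states ∧
    δ i (C.states k) ≠ δ (C.labels k) (C.states k)

/-- `v` is reachable from `u` in the automaton `(A, Σ, δ)`. -/
def Reachable {A S : Type*} (δ : S → A → A) (u v : A) : Prop :=
  ∃ s : List S, s.foldl (fun a i => δ i a) u = v

/-- Action of a word `s ∈ Σ*` on states of powers of the automaton (words over `A`),
via the production functions of the dual automaton: `dualAct δ ρ s = δ_s`. -/
def dualAct {A S : Type*} (δ : S → A → A) (ρ : A → S → S) (s : List S) (u : List A) : List A :=
  s.foldl (fun w i => mealyMap ρ δ i w) u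

/-- Two states of a power of a reversible Mealy automaton lie in the same
connected component iff some `δ_s` maps one to the other. -/
def sameComp {A S : Type*} (δ : S → A → A) (ρ : A → S → S) (u w : List A) : Prop :=
  ∃ s : List S, dualAct δ ρ s u = w

/-- The `n`-th power of the Mealy automaton splits up totally: every connected component
of `M^n` has the same size as each of the components of `M^(n+1)` built from it. -/
def SplitsAt {A S : Type*} (δ : S → A → A) (ρ : A → S → S) (n : ℕ) : Prop :=
  ∀ u : List A, u.length = n → ∀ x : A,
    Set.ncard {w | sameComp δ ρ (u ++ [x]) w} = Set.ncard {w | sameComp δ ρ u w}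

section Aux
variable {A S : Type*} (δ : S → A → A) (ρ : A → S → S)

theorem dualAct_cons (i : S) (s : List S) (u : List A) :
    dualAct δ ρ (i :: s) u = dualAct δ ρ s (mealyMap ρ δ i u) := rfl

theorem dualAct_append (s t : List S) (u : List A) :
    dualAct δ ρ (s ++ t) u = dualAct δ ρ t (dualAct δ ρ s u) :=
  List.foldl_append ..

theorem mealyMap_length (x : A) (s : List S) :
    (mealyMap δ ρ x s).length = s.length := by
  induction s generalizing x with
  | nil => rfl
  | cons i s ih => simp [mealyMap, ih]

theorem dualAct_length (s : List S) (u : List A) :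
    (dualAct δ ρ s u).length = u.length := by
  induction s generalizing u with
  | nil => rfl
  | cons i s ih => rw [dualAct_cons, ih, mealyMap_length]

variable {δ ρ}

theorem mealyMap_injective (hrev : ∀ i : S, Function.Injective (δ i)) (i : S) :
    Function.Injective (mealyMap ρ δ i) := by
  intro u v huv
  induction u generalizing v i with
  | nil => cases v with
    | nil => rfl
    | cons b v => simp [mealyMap] at huv
  | cons a u ih =>
    cases v with
    | nil => simp [mealyMap] at huv
    | cons b v =>
      simp only [mealyMap, List.cons.injEq] at huv
      obtain ⟨h1, h2⟩ := huv
      have hab : a = b := hrev i h1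
      subst hab
      exact congrArg (a :: ·) (ih _ h2)

theorem dualAct_injective (hrev : ∀ i : S, Function.Injective (δ i)) (s : List S) :
    Function.Injective (dualAct δ ρ s) := by
  induction s with
  | nil => exact fun u v h => h
  | cons i s ih =>
    intro u v huv
    exact mealyMap_injective hrev i (ih huv)

/-- structure lemma for single mealyMap on a concat -/
theorem mealyMap_concat (i : S) (u : List A) (c : A) :
    ∃ d : A, mealyMap ρ δ i (u ++ [c]) = mealyMap ρ δ i u ++ [d] := by
  induction u generalizing i with
  | nil => exact ⟨δ i c, rfl⟩
  | cons a u ih =>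
    obtain ⟨d, hd⟩ := ih (ρ a i)
    exact ⟨d, by simp [mealyMap, hd]⟩

theorem dualAct_concat (s : List S) (u : List A) (c : A) :
    ∃ d : A, dualAct δ ρ s (u ++ [c]) = dualAct δ ρ s u ++ [d] := by
  induction s generalizing u c with
  | nil => exact ⟨c, rfl⟩
  | cons i s ih =>
    obtain ⟨d, hd⟩ := mealyMap_concat i u c
    obtain ⟨d', hd'⟩ := ih (mealyMap ρ δ i u) d
    exact ⟨d', by rw [dualAct_cons, hd, hd', dualAct_cons]⟩

theorem dualAct_tail (t : List S) (l : List A) :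
    ∃ t' : List S, dualAct δ ρ t' l.tail = (dualAct δ ρ t l).tail := by
  induction t generalizing l with
  | nil => exact ⟨[], rfl⟩
  | cons i t ih =>
    cases l with
    | nil =>
      refine ⟨[], ?_⟩
      have : ∀ s : List S, dualAct δ ρ s ([] : List A) = [] := by
        intro s; induction s with
        | nil => rfl
        | cons j s ihs => rw [dualAct_cons]; exact ihs
      simp [this]
    | cons a u =>
      obtain ⟨t'', ht''⟩ := ih (mealyMap ρ δ i (a :: u))
      refine ⟨ρ a i :: t'', ?_⟩
      simpa [dualAct_cons, mealyMap] using ht''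

theorem dualAct_drop (k : ℕ) (s : List S) (l : List A) :
    ∃ t : List S, dualAct δ ρ t (l.drop k) = (dualAct δ ρ s l).drop k := by
  induction k generalizing s with
  | zero => exact ⟨s, rfl⟩
  | succ k ih =>
    obtain ⟨t, ht⟩ := ih s
    obtain ⟨t', ht'⟩ := dualAct_tail t (l.drop k)
    refine ⟨t', ?_⟩
    rw [List.tail_drop] at ht'
    rw [ht', ht, List.tail_drop]

theorem sameComp_finite (u : List A) [Finite A] :
    {w | sameComp δ ρ u w}.Finite := by
  apply (List.finite_length_eq A u.length).subset
  rintro w ⟨s, rfl⟩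
  exact dualAct_length δ ρ s u

theorem dualAct_iterate (s : List S) (j : ℕ) (l : List A) :
    (dualAct δ ρ s)^[j] l = dualAct δ ρ (List.flatten (List.replicate j s)) l := by
  induction j with
  | zero => rfl
  | succ j ihj =>
    rw [Function.iterate_succ_apply', ihj, List.replicate_succ', List.flatten_append,
      dualAct_append]
    simp [dualAct]

theorem sameComp_symm (hrev : ∀ i : S, Function.Injective (δ i)) [Finite A]
    {u w : List A} (h : sameComp δ ρ u w) : sameComp δ ρ w u := by
  obtain ⟨s, hs⟩ := h
  have hVfin : Set.Finite {l : List A | l.length = u.length} := List.finite_length_eq A u.length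
  have : Finite {l : List A | l.length = u.length} := hVfin
  have hmem : ∀ j : ℕ, (dualAct δ ρ s)^[j] u ∈ {l : List A | l.length = u.length} := by
    intro j
    induction j with
    | zero => rfl
    | succ j ihj =>
      rw [Function.iterate_succ_apply']
      simpa [Set.mem_setOf_eq, dualAct_length] using ihj
  obtain ⟨a, b, hab, heq⟩ := Finite.exists_ne_map_eq_of_infinite
    (fun j : ℕ => (⟨(dualAct δ ρ s)^[j] u, hmem j⟩ : {l : List A | l.length = u.length}))
  have heq : (dualAct δ ρ s)^[a] u = (dualAct δ ρ s)^[b] u := congrArg Subtype.val heq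
  have H : ∀ {a b : ℕ}, a < b → (dualAct δ ρ s)^[a] u = (dualAct δ ρ s)^[b] u →
      u = (dualAct δ ρ s)^[b - a] u := by
    intro a b hlt heq
    apply (dualAct_injective hrev s).iterate a
    rw [← Function.iterate_add_apply, Nat.add_sub_cancel' hlt.le]
    exact heq
  have key : ∃ k : ℕ, 1 ≤ k ∧ u = (dualAct δ ρ s)^[k] u := by
    rcases hab.lt_or_gt with hlt | hlt
    · exact ⟨b - a, by omega, H hlt heq⟩
    · exact ⟨a - b, by omega, H hlt heq.symm⟩
  obtain ⟨k, hk, key⟩ := key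
  refine ⟨List.flatten (List.replicate (k - 1) s), ?_⟩
  rw [← dualAct_iterate, ← hs]
  have hstep : (dualAct δ ρ s)^[k - 1] (dualAct δ ρ s u) = (dualAct δ ρ s)^[k] u := by
    rw [← Function.iterate_succ_apply]
    congr 1
    omega
  rw [hstep, ← key]

end Aux
theorem no_swap {A S : Type*} {δ : S → A → A} {ρ : A → S → S} [Finite A]
    (hrev : ∀ i : S, Function.Injective (δ i)) {n : ℕ}
    (h : SplitsAt δ ρ n) {u' : List A} (hu' : u'.length = n) {c₁ c₂ : A} (hc : c₁ ≠ c₂)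
    {t : List S} (ht : dualAct δ ρ t (u' ++ [c₁]) = u' ++ [c₂]) : False := by
  set X := {w | sameComp δ ρ (u' ++ [c₁]) w} with hX
  set Y := {w | sameComp δ ρ u' w} with hY
  have hXfin : X.Finite := sameComp_finite _
  have hcard : X.ncard = Y.ncard := h u' hu' c₁
  have h1 : u' ++ [c₂] ∈ X := ⟨t, ht⟩
  have h2 : u' ++ [c₁] ∈ X := ⟨[], rfl⟩
  set X' := X \ {u' ++ [c₂]} with hX'
  have hX'fin : X'.Finite := hXfin.diff
  have hne : u' ++ [c₁] ≠ u' ++ [c₂] := by simpa using hc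
  have hsub : Y ⊆ List.dropLast '' X' := by
    rintro w ⟨s, rfl⟩
    obtain ⟨d, hd⟩ := dualAct_concat s u' c₁
    by_cases hz : dualAct δ ρ s (u' ++ [c₁]) = u' ++ [c₂]
    · have hfix : dualAct δ ρ s u' = u' := by
        have := congrArg List.dropLast (hd.symm.trans hz)
        simpa [List.dropLast_concat] using this
      refine ⟨u' ++ [c₁], ⟨h2, by simpa using hne⟩, ?_⟩
      rw [List.dropLast_concat, hfix]
    · refine ⟨dualAct δ ρ s u' ++ [d], ⟨⟨s, hd⟩, by simp [← hd, hz]⟩, List.dropLast_concat ..⟩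
  have hlt : Y.ncard < X.ncard := by
    calc Y.ncard ≤ (List.dropLast '' X').ncard := Set.ncard_le_ncard hsub (hX'fin.image _)
      _ ≤ X'.ncard := Set.ncard_image_le hX'fin
      _ < X.ncard := Set.ncard_diff_singleton_lt_of_mem h1 hXfin
  omega


/-- Lemma 10 of [Kli13]: for a reversible Mealy automaton with exactly
two states, if `M^n` splits up totally then `M^m` splits up totally for every `m ≥ n`. -/
theorem two_state_splits_forever
    {A S : Type*} [Fintype A] [Fintype S]
    (δ : S → A → A) (ρ : A → S → S)
    (hrev : ∀ i : S, Function.Bijective (δ i))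
    (x y : A) (hxy : x ≠ y) (hA : ∀ z : A, z = x ∨ z = y)
    (n : ℕ) (hn : 1 ≤ n) (h : SplitsAt δ ρ n) :
    ∀ m : ℕ, n ≤ m → SplitsAt δ ρ m := by
  intro m hm v hv b
  have hinj : ∀ i : S, Function.Injective (δ i) := fun i => (hrev i).injective
  set X := {w | sameComp δ ρ (v ++ [b]) w} with hXdef
  set Y := {w | sameComp δ ρ v w} with hYdef
  have himg : List.dropLast '' X = Y := by
    apply Set.Subset.antisymm
    · rintro _ ⟨w, ⟨s, rfl⟩, rfl⟩
      obtain ⟨d, hd⟩ := dualAct_concat s v b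
      rw [hd, List.dropLast_concat]
      exact ⟨s, rfl⟩
    · rintro w ⟨s, rfl⟩
      obtain ⟨d, hd⟩ := dualAct_concat s v b
      exact ⟨dualAct δ ρ s v ++ [d], ⟨s, hd⟩, List.dropLast_concat ..⟩
  have hInj : Set.InjOn List.dropLast X := by
    rintro w₁ hw₁ w₂ hw₂ hEq
    obtain ⟨s₁, hs₁⟩ := hw₁
    obtain ⟨s₂, hs₂⟩ := hw₂
    obtain ⟨d₁, hd₁⟩ := dualAct_concat s₁ v b
    obtain ⟨d₂, hd₂⟩ := dualAct_concat s₂ v b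
    have e₁ : w₁ = dualAct δ ρ s₁ v ++ [d₁] := hs₁.symm.trans hd₁
    have e₂ : w₂ = dualAct δ ρ s₂ v ++ [d₂] := hs₂.symm.trans hd₂
    have hp : dualAct δ ρ s₁ v = dualAct δ ρ s₂ v := by
      rw [e₁, e₂, List.dropLast_concat, List.dropLast_concat] at hEq
      exact hEq
    by_cases hd : d₁ = d₂
    · rw [e₁, e₂, hp, hd]
    · exfalso
      have h12 : sameComp δ ρ w₁ w₂ := by
        obtain ⟨t₁, ht₁⟩ := sameComp_symm hinj ⟨s₁, hs₁⟩
        exact ⟨t₁ ++ s₂, by rw [dualAct_append, ht₁, hs₂]⟩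
      obtain ⟨s, hs⟩ := h12
      obtain ⟨t, htt⟩ := dualAct_drop (m - n) s w₁
      rw [hs] at htt
      have hlen : (dualAct δ ρ s₁ v).length = m := by rw [dualAct_length, hv]
      have hsub0 : m - n - (dualAct δ ρ s₁ v).length = 0 := by omega
      have hdrop₁ : w₁.drop (m - n) =
          (dualAct δ ρ s₁ v).drop (m - n) ++ [d₁] := by
        rw [e₁, List.drop_append, hsub0, List.drop_zero]
      have hdrop₂ : w₂.drop (m - n) =
          (dualAct δ ρ s₁ v).drop (m - n) ++ [d₂] := by
        rw [e₂, List.drop_append, ← hp, hsub0, List.drop_zero]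
      have hu'len : ((dualAct δ ρ s₁ v).drop (m - n)).length = n := by
        rw [List.length_drop, hlen]
        omega
      rw [hdrop₁, hdrop₂] at htt
      exact no_swap hinj h hu'len hd htt
  calc X.ncard = (List.dropLast '' X).ncard := (Set.ncard_image_of_injOn hInj).symm
    _ = Y.ncard := by rw [himg]
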